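/- If f : SG → ℝ is of bounded variation on SG in the sense (A), then f is continuous H^s-almost everywhere, where s = log 3/log 2; i.e., the set of discontinuity points of f has s-dimensional Hausdorff measure zero. -/

import Mathlib

open Set Metric MeasureTheory Filter ENNReal

noncomputable section

/-- The three vertices of the equilateral triangle generating the Sierpinski gasket. -/
def q : Fin 3 → ℝ × ℝ := ![(0,0), (1,0), (1/2, Real.sqrt 3 / 2)]

/-- The contraction maps of the IFS: `u i x = (x + q i)/2`. -/
def u (i : Fin 3) (x : ℝ × ℝ) : ℝ × ℝ := (2⁻¹ : ℝ) • (x + q i)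

/-- The address map of the IFS. -/
def addr (σ : ℕ → Fin 3) : ℝ × ℝ := ∑' n, ((2:ℝ)⁻¹ ^ (n+1)) • q (σ n)

/-- The Sierpinski gasket, as the set of points with an address. -/
def SG : Set (ℝ × ℝ) := Set.range addr

/-- Composition `u_{w₁} ∘ ⋯ ∘ u_{w_n}` along a word `w`. -/
def uw : List (Fin 3) → (ℝ × ℝ) → (ℝ × ℝ)
  | [] => id
  | i :: w => u i ∘ uw w

/-- The level-`n` cell of `SG` indexed by a word `w ∈ {1,2,3}^n`. -/
def cell {n : ℕ} (w : Fin n → Fin 3) : Set (ℝ × ℝ) := uw (List.ofFn w) '' SG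

/-- Oscillation (maximum range) `R_f[X]` of `f` over `X`, valued in `ℝ≥0∞`. -/
def osc (f : ℝ × ℝ → ℝ) (X : Set (ℝ × ℝ)) : ℝ≥0∞ :=
  ⨆ x ∈ X, ⨆ y ∈ X, ENNReal.ofReal |f x - f y|

/-- Total oscillation of order `n`: `R(n,f) = Σ_{w ∈ {1,2,3}^n} R_f[u_w(SG)]`. -/
def oscSum (n : ℕ) (f : ℝ × ℝ → ℝ) : ℝ≥0∞ :=
  ∑ w : Fin n → Fin 3, osc f (cell w)

/-- Total variation in the sense of definition (A). -/
def VA (f : ℝ × ℝ → ℝ) : ℝ≥0∞ := ⨆ n : ℕ, oscSum n f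

/-- Bounded variation in the sense of definition (A). -/
def BVA (f : ℝ × ℝ → ℝ) : Prop := VA f < ⊤

/-- `s = log 3 / log 2`, the dimension of `SG`. -/
def sdim : ℝ := Real.log 3 / Real.log 2

/-- Total oscillation of order `n` with exponent `s`. -/
def oscSumS (n : ℕ) (f : ℝ × ℝ → ℝ) : ℝ≥0∞ :=
  ∑ w : Fin n → Fin 3, (osc f (cell w)) ^ sdim

/-- Total variation in the sense of definition (A*). -/
def VAs (f : ℝ × ℝ → ℝ) : ℝ≥0∞ := ⨆ n : ℕ, oscSumS n f

/-- Bounded variation in the sense of definition (A*). -/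
def BVAs (f : ℝ × ℝ → ℝ) : Prop := VAs f < ⊤

/-- The graph `G_f = {(t, f t) : t ∈ SG} ⊂ ℝ³`. -/
def graphSG (f : ℝ × ℝ → ℝ) : Set ((ℝ × ℝ) × ℝ) := (fun t => (t, f t)) '' SG

/-- Smallest number of sets of diameter at most `δ` needed to cover `F`. -/
def coverNum {X : Type*} [MetricSpace X] (F : Set X) (δ : ℝ) : ℕ :=
  sInf {n : ℕ | ∃ t : Finset (Set X), t.card = n ∧ F ⊆ ⋃₀ ↑t ∧ ∀ U ∈ t, Metric.diam U ≤ δ}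

/-- Upper box (Minkowski) dimension. -/
def upperBoxDim {X : Type*} [MetricSpace X] (F : Set X) : ℝ :=
  Filter.limsup (fun δ : ℝ => Real.log (coverNum F δ) / (-Real.log δ)) (nhdsWithin 0 (Set.Ioi 0))

/-- Lower box dimension. -/
def lowerBoxDim {X : Type*} [MetricSpace X] (F : Set X) : ℝ :=
  Filter.liminf (fun δ : ℝ => Real.log (coverNum F δ) / (-Real.log δ)) (nhdsWithin 0 (Set.Ioi 0))

/-- The Euclidean norm on `ℝ × ℝ`. -/
def enorm2 (x : ℝ × ℝ) : ℝ := Real.sqrt (x.1 ^ 2 + x.2 ^ 2)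

lemma norm_q_le (i : Fin 3) : ‖q i‖ ≤ 1 := by
  have h3 : Real.sqrt 3 ≤ 2 := by
    rw [show (2:ℝ) = Real.sqrt 4 by rw [show (4:ℝ) = 2^2 by norm_num, Real.sqrt_sq]; norm_num]
    exact Real.sqrt_le_sqrt (by norm_num)
  have h0 : (0:ℝ) ≤ Real.sqrt 3 := Real.sqrt_nonneg 3
  fin_cases i <;>
    simp [q, Prod.norm_def, abs_of_nonneg, abs_of_nonneg h0] <;> norm_num <;> linarith

lemma summable_addr (σ : ℕ → Fin 3) :
    Summable (fun n => ((2:ℝ)⁻¹ ^ (n+1)) • q (σ n)) := by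
  apply Summable.of_norm_bounded (g := fun n => (2:ℝ)⁻¹ ^ (n+1))
  · simpa [pow_succ'] using
      (summable_geometric_of_lt_one (by norm_num : (0:ℝ) ≤ 2⁻¹) (by norm_num)).mul_left 2⁻¹
  · intro n
    rw [norm_smul]
    have : ‖(2:ℝ)⁻¹ ^ (n+1)‖ = (2:ℝ)⁻¹ ^ (n+1) := by
      rw [Real.norm_eq_abs, abs_of_nonneg]; positivity
    rw [this]
    calc (2:ℝ)⁻¹ ^ (n+1) * ‖q (σ n)‖ ≤ (2:ℝ)⁻¹ ^ (n+1) * 1 :=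
      mul_le_mul_of_nonneg_left (norm_q_le _) (by positivity)
    _ = _ := mul_one _
lemma norm_addr_le (σ : ℕ → Fin 3) : ‖addr σ‖ ≤ 1 := by
  have hs := summable_addr σ
  calc ‖addr σ‖ ≤ ∑' n, ‖((2:ℝ)⁻¹ ^ (n+1)) • q (σ n)‖ := norm_tsum_le_tsum_norm (hs.norm)
  _ ≤ ∑' n, (2:ℝ)⁻¹ ^ (n+1) := by
      apply Summable.tsum_le_tsum _ hs.norm
      · simpa [pow_succ'] using
          (summable_geometric_of_lt_one (by norm_num : (0:ℝ) ≤ 2⁻¹) (by norm_num)).mul_left 2⁻¹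
      · intro n
        rw [norm_smul, Real.norm_eq_abs, abs_of_nonneg (by positivity)]
        calc (2:ℝ)⁻¹ ^ (n+1) * ‖q (σ n)‖ ≤ (2:ℝ)⁻¹ ^ (n+1) * 1 :=
          mul_le_mul_of_nonneg_left (norm_q_le _) (by positivity)
        _ = _ := mul_one _
  _ = 1 := by
      rw [show (fun n : ℕ => (2:ℝ)⁻¹ ^ (n+1)) = fun n : ℕ => 2⁻¹ * 2⁻¹ ^ n by
        funext n; rw [pow_succ']]
      rw [tsum_mul_left, tsum_geometric_of_lt_one (by norm_num) (by norm_num)]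
      norm_num

lemma sg_bounded : Bornology.IsBounded SG := by
  apply Bornology.IsBounded.subset (Metric.isBounded_closedBall (x := (0:ℝ×ℝ)) (r := 1))
  rintro x ⟨σ, rfl⟩
  simpa [Metric.mem_closedBall, dist_eq_norm] using norm_addr_le σ

lemma addr_shift (σ : ℕ → Fin 3) : addr σ = u (σ 0) (addr (fun k => σ (k+1))) := by
  have hs := summable_addr σ
  have hs' := summable_addr (fun k => σ (k+1))
  rw [addr, Summable.tsum_eq_zero_add hs]
  rw [u, addr, smul_add, ← Summable.tsum_const_smul (2⁻¹:ℝ) hs']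
  rw [add_comm]
  congr 1
  · apply tsum_congr; intro b
    rw [smul_smul, ← pow_succ']
  · rw [pow_one]
lemma addr_tail (n : ℕ) (σ : ℕ → Fin 3) :
    addr σ = uw (List.ofFn fun i : Fin n => σ i) (addr fun k => σ (k+n)) := by
  induction n generalizing σ with
  | zero => simp [uw]
  | succ n ih =>
    rw [List.ofFn_succ]
    have h1 : addr σ = u (σ 0) (addr fun k => σ (k+1)) := addr_shift σ
    rw [h1, ih (fun k => σ (k+1))]
    have e1 : (List.ofFn fun i : Fin n => σ ((i : ℕ)+1)) =
        (List.ofFn fun i : Fin n => σ ((i.succ : Fin (n+1)) : ℕ)) := by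
      congr 1
    have e2 : (fun k => σ (k + 1 + n)) = (fun k => σ (k + (n+1))) := by
      funext k; congr 1; omega
    rw [uw]
    simp only [Function.comp_apply, Fin.val_zero]
    rw [← e1]
    have e3 : (fun k => σ (k + n + 1)) = (fun k => σ (k + (n+1))) := by
      funext k; rw [Nat.add_assoc]
    rw [e3]

lemma addr_mem_cell (n : ℕ) (σ : ℕ → Fin 3) : addr σ ∈ cell (fun i : Fin n => σ i) := by
  rw [cell, addr_tail n σ]
  exact ⟨_, ⟨_, rfl⟩, rfl⟩

lemma sg_subset_cells (n : ℕ) : SG ⊆ ⋃ w : Fin n → Fin 3, cell w := by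
  rintro x ⟨σ, rfl⟩
  exact Set.mem_iUnion.2 ⟨_, addr_mem_cell n σ⟩
lemma lipschitz_u (i : Fin 3) : LipschitzWith 2⁻¹ (u i) := by
  apply LipschitzWith.of_dist_le_mul
  intro x y
  have : u i x - u i y = (2⁻¹:ℝ) • (x - y) := by
    simp only [u, ← smul_sub]; congr 1; abel
  rw [dist_eq_norm, this, norm_smul]
  simp [Real.norm_eq_abs, dist_eq_norm]

lemma lipschitz_uw (l : List (Fin 3)) : LipschitzWith (2⁻¹ ^ l.length) (uw l) := by
  induction l with
  | nil => simpa [uw] using LipschitzWith.id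
  | cons i l ih =>
    rw [uw, List.length_cons, pow_succ, mul_comm]
    exact (lipschitz_u i).comp ih

lemma continuous_addr : Continuous addr := by
  apply continuous_tsum (u := fun n => (2:ℝ)⁻¹ ^ (n+1))
  · intro n
    exact (show Continuous fun _ : ℕ → Fin 3 => (2:ℝ)⁻¹ ^ (n+1) from continuous_const).smul ((continuous_of_discreteTopology (f := q)).comp (continuous_apply (A := fun _ : ℕ => Fin 3) n))
  · simpa [pow_succ'] using
      (summable_geometric_of_lt_one (by norm_num : (0:ℝ) ≤ 2⁻¹) (by norm_num)).mul_left 2⁻¹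
  · intro n σ
    rw [norm_smul, Real.norm_eq_abs, abs_of_nonneg (by positivity)]
    calc (2:ℝ)⁻¹ ^ (n+1) * ‖q (σ n)‖ ≤ (2:ℝ)⁻¹ ^ (n+1) * 1 :=
      mul_le_mul_of_nonneg_left (norm_q_le _) (by positivity)
    _ = _ := mul_one _

lemma sg_compact : IsCompact SG :=
  isCompact_range continuous_addr

lemma continuous_uw (l : List (Fin 3)) : Continuous (uw l) := (lipschitz_uw l).continuous

lemma cell_compact {n : ℕ} (w : Fin n → Fin 3) : IsCompact (cell w) :=
  sg_compact.image (continuous_uw _)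

lemma cell_nonempty {n : ℕ} (w : Fin n → Fin 3) : (cell w).Nonempty :=
  (Set.range_nonempty addr).image _

lemma ediam_cell_le {n : ℕ} (w : Fin n → Fin 3) :
    EMetric.diam (cell w) ≤ (2⁻¹ : ℝ≥0∞) ^ n * EMetric.diam SG := by
  have h := (lipschitz_uw (List.ofFn w)).ediam_image_le SG
  rw [cell]
  refine h.trans (le_of_eq ?_)
  rw [List.length_ofFn]
  congr 1
  simp [ENNReal.coe_pow, ENNReal.inv_pow]
open Topology
lemma le_osc {f : ℝ × ℝ → ℝ} {X : Set (ℝ × ℝ)} {x y : ℝ × ℝ} (hx : x ∈ X) (hy : y ∈ X) :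
    ENNReal.ofReal |f x - f y| ≤ osc f X := by
  rw [osc]
  exact le_iSup₂_of_le x hx (le_iSup₂_of_le y hy le_rfl)

lemma exists_bad_cell (f : ℝ × ℝ → ℝ) {x : ℝ × ℝ} (hx : x ∈ SG) {ε : ℝ}
    (hbad : ∀ δ > 0, ∃ y ∈ SG, dist y x < δ ∧ ε ≤ |f y - f x|) (n : ℕ) :
    ∃ w : Fin n → Fin 3, x ∈ cell w ∧ ENNReal.ofReal ε ≤ osc f (cell w) := by
  classical
  set K : Set (ℝ × ℝ) :=
    ⋃ w ∈ Finset.filter (fun w => x ∉ cell w) (Finset.univ : Finset (Fin n → Fin 3)), cell w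
    with hK
  have hKclosed : IsClosed K :=
    Set.Finite.isClosed_biUnion (Finset.finite_toSet _) (fun w _ => (cell_compact w).isClosed)
  have hxK : x ∉ K := by
    rw [hK]
    simp only [Set.mem_iUnion]
    rintro ⟨w, hw, hxw⟩
    rw [Finset.mem_filter] at hw
    exact hw.2 hxw
  obtain ⟨δ, hδpos, hball⟩ := Metric.isOpen_iff.1 hKclosed.isOpen_compl x hxK
  obtain ⟨y, hySG, hyd, hyf⟩ := hbad δ hδpos
  obtain ⟨w, hyw⟩ := Set.mem_iUnion.1 (sg_subset_cells n hySG)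
  have hyK : y ∉ K := hball (by simpa [Metric.mem_ball] using hyd)
  have hxw : x ∈ cell w := by
    by_contra hxc
    exact hyK (Set.mem_biUnion (Finset.mem_filter.2 ⟨Finset.mem_univ _, hxc⟩) hyw)
  refine ⟨w, hxw, ?_⟩
  exact le_trans (ENNReal.ofReal_le_ofReal hyf) (le_osc hyw hxw)

lemma sdim_pos : 0 < sdim :=
  div_pos (Real.log_pos (by norm_num)) (Real.log_pos (by norm_num))

lemma measure_Xeps (f : ℝ × ℝ → ℝ) (hbv : BVA f) {ε : ℝ} (hε : 0 < ε) :
    μH[sdim] {x | x ∈ SG ∧ ∀ δ > 0, ∃ y ∈ SG, dist y x < δ ∧ ε ≤ |f y - f x|} = 0 := by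
  classical
  set X := {x | x ∈ SG ∧ ∀ δ > 0, ∃ y ∈ SG, dist y x < δ ∧ ε ≤ |f y - f x|} with hX
  set D : ℝ≥0∞ := EMetric.diam SG with hD
  have hDne : D ≠ ⊤ := by
    exact Metric.isBounded_iff_ediam_ne_top.1 sg_bounded
  set t : ∀ n : ℕ, (Fin n → Fin 3) → Set (ℝ × ℝ) :=
    fun n w => if ENNReal.ofReal ε ≤ osc f (cell w) then cell w else ∅ with ht
  set r : ℕ → ℝ≥0∞ := fun n => (2⁻¹ : ℝ≥0∞) ^ n * D with hr
  have hrt : Tendsto r atTop (𝓝 0) := by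
    have h1 : Tendsto (fun n : ℕ => (2⁻¹ : ℝ≥0∞) ^ n) atTop (𝓝 0) :=
      ENNReal.tendsto_pow_atTop_nhds_zero_of_lt_one (by simp [ENNReal.inv_lt_one, ENNReal.one_lt_two])
    simpa using ENNReal.Tendsto.mul_const h1 (Or.inr hDne)
  have hdiam : ∀ n, ∀ w : Fin n → Fin 3, EMetric.diam (t n w) ≤ r n := by
    intro n w
    rw [ht]
    by_cases h : ENNReal.ofReal ε ≤ osc f (cell w)
    · simpa [h] using ediam_cell_le w
    · simp [h, EMetric.diam]
  have hcover : ∀ n : ℕ, X ⊆ ⋃ w : Fin n → Fin 3, t n w := by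
    intro n x hx
    obtain ⟨w, hxw, hosc⟩ := exists_bad_cell f hx.1 hx.2 n
    exact Set.mem_iUnion.2 ⟨w, by rw [ht]; simp only [hosc, if_true]; exact hxw⟩
  have hle := MeasureTheory.Measure.hausdorffMeasure_le_liminf_sum sdim X r hrt t
    (Filter.Eventually.of_forall hdiam) (Filter.Eventually.of_forall hcover)
  -- now bound the liminf by 0
  set K : ℝ≥0∞ := VA f / ENNReal.ofReal ε with hKdef
  have hεne : ENNReal.ofReal ε ≠ 0 := by simp [ENNReal.ofReal_eq_zero, not_le, hε]
  have hKne : K ≠ ⊤ := by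
    rw [hKdef]
    exact (ENNReal.div_lt_top hbv.ne hεne).ne
  set ρ : ℝ≥0∞ := (2⁻¹ : ℝ≥0∞) ^ sdim with hρ
  set Ds : ℝ≥0∞ := D ^ sdim with hDs
  have hDsne : Ds ≠ ⊤ := by
    rw [hDs]
    exact (ENNReal.rpow_lt_top_of_nonneg sdim_pos.le hDne).ne
  have hsum : ∀ n : ℕ, (∑ w : Fin n → Fin 3, EMetric.diam (t n w) ^ sdim) ≤ K * (ρ ^ n * Ds) := by
    intro n
    set B : Finset (Fin n → Fin 3) :=
      Finset.filter (fun w => ENNReal.ofReal ε ≤ osc f (cell w)) Finset.univ with hB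
    have hcard : (B.card : ℝ≥0∞) ≤ K := by
      rw [hKdef, ENNReal.le_div_iff_mul_le (Or.inl hεne) (Or.inl ENNReal.ofReal_ne_top)]
      calc (B.card : ℝ≥0∞) * ENNReal.ofReal ε = ∑ _w ∈ B, ENNReal.ofReal ε := by
            rw [Finset.sum_const, nsmul_eq_mul]
      _ ≤ ∑ w ∈ B, osc f (cell w) := by
            apply Finset.sum_le_sum
            intro w hw
            exact (Finset.mem_filter.1 hw).2
      _ ≤ ∑ w : Fin n → Fin 3, osc f (cell w) :=
            Finset.sum_le_sum_of_subset (Finset.subset_univ _)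
      _ ≤ VA f := le_iSup (fun n => oscSum n f) n
    have hterm : ∀ w : Fin n → Fin 3, EMetric.diam (t n w) ^ sdim
        ≤ if w ∈ B then ρ ^ n * Ds else 0 := by
      intro w
      by_cases h : ENNReal.ofReal ε ≤ osc f (cell w)
      · have hwB : w ∈ B := Finset.mem_filter.2 ⟨Finset.mem_univ _, h⟩
        rw [if_pos hwB, ht]
        simp only [if_pos h]
        calc EMetric.diam (cell w) ^ sdim ≤ ((2⁻¹ : ℝ≥0∞) ^ n * D) ^ sdim :=
              ENNReal.rpow_le_rpow (ediam_cell_le w) sdim_pos.le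
        _ = ((2⁻¹ : ℝ≥0∞) ^ n) ^ sdim * Ds := ENNReal.mul_rpow_of_nonneg _ _ sdim_pos.le
        _ = ρ ^ n * Ds := by
              rw [hρ, ← ENNReal.rpow_natCast (2⁻¹ : ℝ≥0∞) n, ← ENNReal.rpow_mul,
                ← ENNReal.rpow_natCast ((2⁻¹ : ℝ≥0∞) ^ sdim) n, ← ENNReal.rpow_mul,
                mul_comm sdim (n:ℝ)]
      · have hwB : w ∉ B := by
          rw [hB, Finset.mem_filter]
          tauto
        rw [if_neg hwB, ht]
        simp only [if_neg h]
        rw [show EMetric.diam (∅ : Set (ℝ × ℝ)) = 0 from Metric.ediam_empty, ENNReal.zero_rpow_of_pos sdim_pos]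
    calc (∑ w : Fin n → Fin 3, EMetric.diam (t n w) ^ sdim)
        ≤ ∑ w : Fin n → Fin 3, if w ∈ B then ρ ^ n * Ds else 0 :=
          Finset.sum_le_sum (fun w _ => hterm w)
    _ = ∑ _w ∈ B, (ρ ^ n * Ds) := by rw [Finset.sum_ite_mem, Finset.univ_inter]
    _ = (B.card : ℝ≥0∞) * (ρ ^ n * Ds) := by rw [Finset.sum_const, nsmul_eq_mul]
    _ ≤ K * (ρ ^ n * Ds) := mul_le_mul_left hcard _
  have hρlt : ρ < 1 := by
    rw [hρ]
    apply ENNReal.rpow_lt_one (by simp [ENNReal.inv_lt_one, ENNReal.one_lt_two]) sdim_pos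
  have htend : Tendsto (fun n : ℕ => K * (ρ ^ n * Ds)) atTop (𝓝 0) := by
    have h1 : Tendsto (fun n : ℕ => ρ ^ n) atTop (𝓝 0) :=
      ENNReal.tendsto_pow_atTop_nhds_zero_of_lt_one hρlt
    have h2 : Tendsto (fun n : ℕ => ρ ^ n * Ds) atTop (𝓝 0) := by
      simpa using ENNReal.Tendsto.mul_const h1 (Or.inr hDsne)
    simpa using ENNReal.Tendsto.const_mul h2 (Or.inr hKne)
  have hlim : liminf (fun n : ℕ => ∑ w : Fin n → Fin 3, EMetric.diam (t n w) ^ sdim) atTop = 0 := by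
    apply le_antisymm _ (zero_le)
    calc liminf (fun n : ℕ => ∑ w : Fin n → Fin 3, EMetric.diam (t n w) ^ sdim) atTop
        ≤ liminf (fun n : ℕ => K * (ρ ^ n * Ds)) atTop :=
          liminf_le_liminf (Filter.Eventually.of_forall hsum)
    _ = 0 := htend.liminf_eq
  exact le_antisymm (hle.trans hlim.le) (zero_le)
/-- a function of bounded variation in sense (A) is continuous
`H^s`-almost everywhere on `SG`, `s = log 3 / log 2`. -/
theorem stmt18 (f : ℝ × ℝ → ℝ) (hbv : BVA f) :
    μH[sdim] {x | x ∈ SG ∧ ¬ ContinuousWithinAt f SG x} = 0 := by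
  apply measure_mono_null (t := ⋃ k : ℕ,
    {x | x ∈ SG ∧ ∀ δ > 0, ∃ y ∈ SG, dist y x < δ ∧ (1:ℝ)/(k+1) ≤ |f y - f x|})
  · rintro x ⟨hxSG, hxc⟩
    rw [Metric.continuousWithinAt_iff] at hxc
    push_neg at hxc
    obtain ⟨ε, hε, hbad⟩ := hxc
    obtain ⟨k, hk⟩ := exists_nat_one_div_lt hε
    refine Set.mem_iUnion.2 ⟨k, hxSG, ?_⟩
    intro δ hδ
    obtain ⟨y, hySG, hyd, hyf⟩ := hbad δ hδ
    refine ⟨y, hySG, hyd, ?_⟩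
    rw [Real.dist_eq] at hyf
    calc (1:ℝ)/(k+1) ≤ ε := hk.le
    _ ≤ |f y - f x| := hyf
  · apply measure_iUnion_null
    intro k
    exact measure_Xeps f hbv (by positivity)
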